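/- Let Y be a locally compact topological space and f : Y → ℂ a continuous open map such that 0 ∈ f(Y) and the preimage f⁻¹(0) is compact. Then there exist an open neighborhood V ⊆ Y of f⁻¹(0) and an open neighborhood Δ ⊆ ℂ of 0 such that the restriction f|_V : V → Δ is proper and surjective. -/
import Mathlib


open Set Metric

/-- Lemma 2.1. For a locally compact space `Y` and a continuous open
map `f : Y → ℂ` with `0` in the image and compact fiber over `0`, there are an open
neighborhood `V` of `f⁻¹(0)` and an open neighborhood `Δ` of `0` such that
`f|_V : V → Δ` is proper and surjective. -/
theorem stmt0 {Y : Type*} [TopologicalSpace Y]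
    (hloc : ∀ y : Y, ∃ U : Set Y, IsOpen U ∧ y ∈ U ∧ IsCompact (closure U))
    (f : Y → ℂ) (hf : Continuous f) (hopen : IsOpenMap f)
    (h0 : (0 : ℂ) ∈ range f) (hcpt : IsCompact (f ⁻¹' {0})) :
    ∃ (V : Set Y) (Δ : Set ℂ), IsOpen V ∧ f ⁻¹' {0} ⊆ V ∧ IsOpen Δ ∧ (0 : ℂ) ∈ Δ ∧
      MapsTo f V Δ ∧ (∀ K : Set ℂ, K ⊆ Δ → IsCompact K → IsCompact (V ∩ f ⁻¹' K)) ∧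
      Δ ⊆ f '' V := by
  classical
  choose W hWopen hWmem hWcl using hloc
  obtain ⟨t, ht⟩ := hcpt.elim_nhds_subcover W (fun y _ => (hWopen y).mem_nhds (hWmem y))
  set U : Set Y := ⋃ y ∈ t, W y with hU
  have hUopen : IsOpen U := isOpen_biUnion fun y _ => hWopen y
  have hsub : f ⁻¹' {0} ⊆ U := ht.2
  have hC : IsCompact (closure U) := by
    have hcl : IsCompact (⋃ y ∈ t, closure (W y)) :=
      t.finite_toSet.isCompact_biUnion fun y _ => hWcl y
    refine hcl.of_isClosed_subset isClosed_closure ?_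
    refine closure_minimal (iUnion₂_mono fun y _ => subset_closure) ?_
    exact t.finite_toSet.isClosed_biUnion fun y _ => isClosed_closure
  -- the boundary image
  have hK0 : IsCompact (f '' (closure U \ U)) :=
    (hC.diff hUopen).image hf
  have hK0closed : IsClosed (f '' (closure U \ U)) := hK0.isClosed
  set Δ : Set ℂ := f '' U \ f '' (closure U \ U) with hΔ
  have hΔopen : IsOpen Δ := (hopen U hUopen).sdiff hK0closed
  have h0Δ : (0 : ℂ) ∈ Δ := by
    obtain ⟨y, hy⟩ := h0
    have hyU : y ∈ U := hsub (by simp [hy])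
    refine ⟨⟨y, hyU, hy⟩, ?_⟩
    rintro ⟨z, hz, hfz⟩
    exact hz.2 (hsub (by simp [hfz]))
  set V : Set Y := U ∩ f ⁻¹' Δ with hV
  have hVopen : IsOpen V := hUopen.inter (hΔopen.preimage hf)
  have hfibV : f ⁻¹' {0} ⊆ V := fun y hy => ⟨hsub hy, by simpa using hy ▸ h0Δ⟩
  have key : ∀ K : Set ℂ, K ⊆ Δ → V ∩ f ⁻¹' K = closure U ∩ f ⁻¹' K := by
    intro K hK
    apply Subset.antisymm
    · exact inter_subset_inter (fun y hy => subset_closure hy.1) subset_rfl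
    · rintro y ⟨hyc, hyK⟩
      have hΔy : f y ∈ Δ := hK hyK
      have hyU : y ∈ U := by
        by_contra hyU
        exact hΔy.2 ⟨y, ⟨hyc, hyU⟩, rfl⟩
      exact ⟨⟨hyU, hΔy⟩, hyK⟩
  refine ⟨V, Δ, hVopen, hfibV, hΔopen, h0Δ, fun y hy => hy.2, ?_, ?_⟩
  · intro K hK hKcpt
    rw [key K hK]
    exact hC.inter_right (hKcpt.isClosed.preimage hf)
  · rintro z hz
    obtain ⟨y, hyU, rfl⟩ := hz.1
    exact ⟨y, ⟨hyU, hz⟩, rfl⟩
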